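/- For every integer d ≥ 1 there exists a constant C_d > 0 such that for every closed B_d-circuit c of size n whose value v is nonzero, one has 2^{−2^{C_d·n}} < |v| < 2^{2^{C_d·n}}. -/

import Mathlib

open scoped Classical

/-- A gate operation in a straight-line program (closed `B_d`-circuit).
Natural-number arguments are indices of earlier gates. -/
inductive GateOp where
  | zero : GateOp
  | one : GateOp
  | add (a b : ℕ) : GateOp
  | sub (a b : ℕ) : GateOp
  | mul (a b : ℕ) : GateOp
  | ch (x n z p : ℕ) : GateOp
  | root (δ : ℕ) (args : Fin (δ + 1) → ℕ) : GateOp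

/-- The largest real root of the polynomial `Σ_i a i · x^i`, if it exists,
and `0` otherwise. -/
noncomputable def largestRoot {δ : ℕ} (a : Fin (δ + 1) → ℝ) : ℝ :=
  if h : ∃ ζ : ℝ,
      IsGreatest {x : ℝ | ∑ i : Fin (δ + 1), a i * x ^ (i : ℕ) = 0} ζ
  then h.choose else 0

/-- The value of a single gate, given the list `prev` of values of all
earlier gates. -/
noncomputable def GateOp.step (prev : List ℝ) : GateOp → ℝ
  | .zero => 0
  | .one => 1
  | .add a b => prev.getD a 0 + prev.getD b 0
  | .sub a b => prev.getD a 0 - prev.getD b 0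
  | .mul a b => prev.getD a 0 * prev.getD b 0
  | .ch x n z p =>
      if prev.getD x 0 < 0 then prev.getD n 0
      else if prev.getD x 0 = 0 then prev.getD z 0
      else prev.getD p 0
  | .root _ args => largestRoot fun i => prev.getD (args i) 0

/-- The list of values of all gates of a circuit, in order. -/
noncomputable def circuitValues (c : List GateOp) : List ℝ :=
  c.foldl (fun prev g => prev ++ [g.step prev]) []

/-- The value of a closed circuit: the value of its last gate. -/
noncomputable def circuitValue (c : List GateOp) : ℝ :=
  (circuitValues c).getD (c.length - 1) 0

/-- Well-formedness of one gate sitting at position `k` of a `B_d`-circuit: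
all references point to strictly earlier gates and root gates have
`1 ≤ δ ≤ d`. -/
def GateOp.WF (d k : ℕ) : GateOp → Prop
  | .zero => True
  | .one => True
  | .add a b => a < k ∧ b < k
  | .sub a b => a < k ∧ b < k
  | .mul a b => a < k ∧ b < k
  | .ch x n z p => x < k ∧ n < k ∧ z < k ∧ p < k
  | .root δ args => 1 ≤ δ ∧ δ ≤ d ∧ ∀ i, args i < k

/-- A closed `B_d`-circuit: a straight-line program all of whose gates are
well formed. -/
def IsCircuit (d : ℕ) (c : List GateOp) : Prop :=
  ∀ (k : ℕ) (hk : k < c.length), (c.get ⟨k, hk⟩).WF d k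


open Polynomial

noncomputable def Complex.abs : AbsoluteValue ℂ ℝ :=
  IsAbsoluteValue.toAbsoluteValue (norm : ℂ → ℝ)

lemma Complex.abs_ofReal (r : ℝ) : Complex.abs (r : ℂ) = |r| := Complex.norm_real r

lemma Complex.abs_intCast (z : ℤ) : Complex.abs (z : ℂ) = |(z : ℝ)| := Complex.norm_intCast z

noncomputable def HH (d k : ℕ) : ℝ := 2 ^ ((2*d+4) ^ (k+2))

def CInv (d : ℕ) (vs : List ℝ) (L : IntermediateField ℚ ℂ) (xf yf : ℕ → L) : Prop :=
  ∀ k, k < vs.length →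
    IsIntegral ℤ (xf k : ℂ) ∧ IsIntegral ℤ (yf k : ℂ) ∧ (yf k : ℂ) ≠ 0 ∧
    ((vs.getD k 0 : ℝ) : ℂ) = (xf k : ℂ) / (yf k : ℂ) ∧
    ∀ φ : L →ₐ[ℚ] ℂ, Complex.abs (φ (xf k)) ≤ HH d k ∧ Complex.abs (φ (yf k)) ≤ HH d k

def GoodList (d : ℕ) (vs : List ℝ) : Prop :=
  ∃ L : IntermediateField ℚ ℂ, FiniteDimensional ℚ L ∧
    Module.finrank ℚ L ≤ (2*d+4) ^ vs.length ∧ ∃ xf yf : ℕ → L, CInv d vs L xf yf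

lemma circuitValues_concat (c : List GateOp) (g : GateOp) :
    circuitValues (c ++ [g]) = circuitValues c ++ [g.step (circuitValues c)] := by
  simp [circuitValues, List.foldl_append]

lemma length_circuitValues (c : List GateOp) : (circuitValues c).length = c.length := by
  induction c using List.reverseRecOn with
  | nil => rfl
  | append_singleton c g ih => rw [circuitValues_concat]; simp [ih]

lemma isCircuit_concat {d : ℕ} {c : List GateOp} {g : GateOp} (h : IsCircuit d (c ++ [g])) :
    IsCircuit d c ∧ g.WF d c.length := by
  constructor
  · intro k hk
    have hk' : k < (c ++ [g]).length := by simp; omega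
    have := h k hk'
    have hget : (c ++ [g]).get ⟨k, hk'⟩ = c.get ⟨k, hk⟩ := by
      simp [List.getElem_append_left hk]
    rwa [hget] at this
  · have hk' : c.length < (c ++ [g]).length := by simp
    have := h c.length hk'
    have hget : (c ++ [g]).get ⟨c.length, hk'⟩ = g := by simp
    rwa [hget] at this

lemma getD_append_left (l : List ℝ) (a : ℝ) {k : ℕ} (h : k < l.length) :
    (l ++ [a]).getD k 0 = l.getD k 0 :=
  List.getD_append _ _ _ _ h

lemma getD_concat_length (l : List ℝ) (a : ℝ) : (l ++ [a]).getD l.length 0 = a := by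
  simp [List.getD_eq_getElem?_getD, List.getElem?_concat_length]

lemma goodList_nil (d : ℕ) : GoodList d [] := by
  refine ⟨⊥, inferInstance, ?_, fun _ => 1, fun _ => 1, ?_⟩
  · simp [IntermediateField.finrank_bot]
  · intro k hk; simp at hk

lemma one_le_HH (d k : ℕ) : 1 ≤ HH d k := one_le_pow₀ one_le_two

lemma HH_mono (d : ℕ) {k m : ℕ} (h : k ≤ m) : HH d k ≤ HH d m :=
  pow_le_pow_right₀ one_le_two (Nat.pow_le_pow_right (by omega) (by omega))

lemma keyIneq (d n : ℕ) :
    (d+1 : ℝ) * ((2:ℝ)^((2*d+4)^(n+1)))^(d+1) ≤ HH d n := by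
  have hX : 1 ≤ (2*d+4)^(n+1) := Nat.one_le_pow _ _ (by omega)
  have h2 : (d+1:ℝ) ≤ 2^(d+1) := by exact_mod_cast (Nat.lt_two_pow_self (n := d+1)).le
  have h3 : ((2:ℝ)^((2*d+4)^(n+1)))^(d+1) = 2^((2*d+4)^(n+1) * (d+1)) := by
    rw [← pow_mul]
  have hnat : (d+1) + (2*d+4)^(n+1) * (d+1) ≤ (2*d+4)^(n+2) := by
    have he : (2*d+4)^(n+2) = (2*d+4)^(n+1) * (2*d+4) := by ring
    rw [he]; nlinarith [hX]
  calc (d+1 : ℝ) * ((2:ℝ)^((2*d+4)^(n+1)))^(d+1)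
      ≤ 2^(d+1) * ((2:ℝ)^((2*d+4)^(n+1)))^(d+1) := by
        apply mul_le_mul_of_nonneg_right h2 (by positivity)
    _ = 2^((d+1) + (2*d+4)^(n+1) * (d+1)) := by rw [h3, ← pow_add]
    _ ≤ HH d n := pow_le_pow_right₀ one_le_two hnat

lemma goodList_extend {d : ℕ} {vs : List ℝ} {v : ℝ}
    (L L' : IntermediateField ℚ ℂ) (hle : L ≤ L')
    (hFD' : FiniteDimensional ℚ L')
    (hrk' : Module.finrank ℚ L' ≤ (2*d+4) ^ (vs.length + 1))
    (xf yf : ℕ → L) (hinv : CInv d vs L xf yf)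
    (a b : L')
    (ha : IsIntegral ℤ (a:ℂ)) (hb : IsIntegral ℤ (b:ℂ)) (hb0 : (b:ℂ) ≠ 0)
    (hv : ((v:ℝ):ℂ) = (a:ℂ) / (b:ℂ))
    (hab : ∀ φ : L' →ₐ[ℚ] ℂ,
      Complex.abs (φ a) ≤ HH d vs.length ∧ Complex.abs (φ b) ≤ HH d vs.length) :
    GoodList d (vs ++ [v]) := by
  classical
  let ι := IntermediateField.inclusion hle
  refine ⟨L', hFD', ?_, (fun j => if j = vs.length then a else ι (xf j)),
      (fun j => if j = vs.length then b else ι (yf j)), ?_⟩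
  · simpa using hrk'
  · intro k hk
    rw [List.length_append, List.length_singleton] at hk
    by_cases hke : k = vs.length
    · subst hke
      simp only [if_pos rfl]
      rw [getD_concat_length]
      exact ⟨ha, hb, hb0, hv, hab⟩
    · have hklt : k < vs.length := by omega
      obtain ⟨h1, h2, h3, h4, h5⟩ := hinv k hklt
      have hcoe : ∀ u : L, ((ι u : L') : ℂ) = (u : ℂ) := fun u => rfl
      simp only [if_neg hke]
      rw [getD_append_left _ _ hklt]
      refine ⟨by rw [hcoe]; exact h1, by rw [hcoe]; exact h2, by rw [hcoe]; exact h3,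
        by rw [hcoe, hcoe]; exact h4, ?_⟩
      intro φ
      exact h5 (φ.comp ι)

-- root bound lemma
lemma root_bound {p : Polynomial ℂ} {z : ℂ} (hp : p ≠ 0) (hz : p.eval z = 0)
    {B : ℝ} (hB : 1 ≤ B) (hc : ∀ i, Complex.abs (p.coeff i) ≤ B) :
    Complex.abs (p.leadingCoeff * z) ≤ (p.natDegree + 1) * B := by
  set l := p.natDegree with hl
  have hl0 : l ≠ 0 := by
    intro h0
    have hpc : p = Polynomial.C (p.coeff 0) := Polynomial.eq_C_of_natDegree_eq_zero h0
    rw [hpc] at hz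
    simp at hz
    exact hp (by rw [hpc, hz, map_zero])
  have hBnn : (0:ℝ) ≤ B := le_trans zero_le_one hB
  by_cases hz1 : Complex.abs z ≤ 1
  · calc Complex.abs (p.leadingCoeff * z) = Complex.abs p.leadingCoeff * Complex.abs z :=
        map_mul _ _ _
    _ ≤ B * 1 := mul_le_mul (hc l) hz1 (AbsoluteValue.nonneg _ _) hBnn
    _ ≤ (l + 1) * B := by nlinarith
  · push_neg at hz1
    have hzpos : (0:ℝ) < Complex.abs z := lt_trans one_pos hz1
    have hev : ∑ i ∈ Finset.range (l+1), p.coeff i * z ^ i = 0 := by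
      rw [← Polynomial.eval_eq_sum_range] ; exact hz
    rw [Finset.sum_range_succ] at hev
    have key : p.leadingCoeff * z ^ l = -∑ i ∈ Finset.range l, p.coeff i * z ^ i := by
      rw [Polynomial.leadingCoeff]
      linear_combination hev
    have habs : Complex.abs p.leadingCoeff * (Complex.abs z) ^ l
        ≤ l * B * (Complex.abs z) ^ (l-1) := by
      have hck := congrArg Complex.abs key
      rw [map_mul, map_pow, AbsoluteValue.map_neg] at hck
      rw [hck]
      calc Complex.abs (∑ i ∈ Finset.range l, p.coeff i * z ^ i)
          ≤ ∑ i ∈ Finset.range l, Complex.abs (p.coeff i * z ^ i) := by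
            exact Complex.abs.sum_le _ _
        _ ≤ ∑ _i ∈ Finset.range l, B * (Complex.abs z) ^ (l-1) := by
            apply Finset.sum_le_sum
            intro i hi
            rw [map_mul, map_pow]
            apply mul_le_mul (hc i) _ (by positivity) hBnn
            apply pow_le_pow_right₀ (le_of_lt hz1)
            have := Finset.mem_range.mp hi
            omega
        _ = l * B * (Complex.abs z)^(l-1) := by
            rw [Finset.sum_const, Finset.card_range, nsmul_eq_mul]; ring
    have hlsplit : (Complex.abs z) ^ l = (Complex.abs z) ^ (l-1) * Complex.abs z := by
      rw [← pow_succ]; congr 1; omega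
    rw [hlsplit, ← mul_assoc] at habs
    have hpow : (0:ℝ) < (Complex.abs z) ^ (l-1) := by positivity
    have hfin : Complex.abs p.leadingCoeff * Complex.abs z ≤ l * B := by
      nlinarith [habs, hpow]
    calc Complex.abs (p.leadingCoeff * z) = Complex.abs p.leadingCoeff * Complex.abs z :=
        map_mul _ _ _
      _ ≤ l * B := hfin
      _ ≤ (l+1) * B := by nlinarith

set_option maxHeartbeats 1000000 in
lemma one_le_abs_mul {L : IntermediateField ℚ ℂ} [FiniteDimensional ℚ L]
    (a : L) (ha : (a:ℂ) ≠ 0) (hint : IsIntegral ℤ (a:ℂ)) {B : ℝ} (hB : 1 ≤ B)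
    (hb : ∀ φ : L →ₐ[ℚ] ℂ, Complex.abs (φ a) ≤ B) :
    1 ≤ Complex.abs (a:ℂ) * B ^ (Module.finrank ℚ L - 1) := by
  have ha' : a ≠ 0 := fun h => ha (by rw [h]; simp)
  have hint' : IsIntegral ℤ a := by
    have h0 : algebraMap L ℂ a = (a:ℂ) := rfl
    rw [← isIntegral_algebraMap_iff (algebraMap (↥L) ℂ).injective, h0]
    exact hint
  obtain ⟨z, hz⟩ := IsIntegrallyClosed.isIntegral_iff.mp (Algebra.isIntegral_norm ℚ hint')
  have hprod : ((algebraMap ℚ ℂ) ((Algebra.norm ℚ) a)) = ∏ σ : L →ₐ[ℚ] ℂ, σ a :=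
    Algebra.norm_eq_prod_embeddings ℚ ℂ a
  have hσne : ∀ σ : L →ₐ[ℚ] ℂ, σ a ≠ 0 := by
    intro σ h
    exact ha' (σ.toRingHom.injective (by simpa using h))
  have hNne : (Algebra.norm ℚ) a ≠ 0 := by
    intro h
    rw [h, map_zero] at hprod
    exact (Finset.prod_ne_zero_iff.mpr (fun σ _ => hσne σ)) hprod.symm
  have hzne : z ≠ 0 := by
    intro h; rw [h] at hz; simp at hz; exact hNne hz.symm
  have h1z : (1:ℝ) ≤ |(z:ℝ)| := by
    exact_mod_cast Int.one_le_abs (by exact_mod_cast hzne)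
  have habsN : 1 ≤ Complex.abs ((algebraMap ℚ ℂ) ((Algebra.norm ℚ) a)) := by
    rw [← hz]
    have h2 : ((algebraMap ℚ ℂ) ((algebraMap ℤ ℚ) z)) = (z:ℂ) := by simp
    rw [h2, Complex.abs_intCast]
    exact h1z
  rw [hprod, map_prod] at habsN
  set σ₀ : L →ₐ[ℚ] ℂ := L.val with hσ₀
  have hmem : σ₀ ∈ (Finset.univ : Finset (L →ₐ[ℚ] ℂ)) := Finset.mem_univ _
  rw [← Finset.mul_prod_erase _ _ hmem] at habsN
  have hcard : (Finset.univ.erase σ₀).card = Module.finrank ℚ L - 1 := by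
    rw [Finset.card_erase_of_mem hmem, Finset.card_univ, AlgHom.card ℚ (↥L) ℂ]
  have hrest : ∏ σ ∈ Finset.univ.erase σ₀, Complex.abs (σ a)
      ≤ B ^ (Module.finrank ℚ L - 1) := by
    rw [← hcard]
    calc ∏ σ ∈ Finset.univ.erase σ₀, Complex.abs (σ a)
        ≤ ∏ _σ ∈ Finset.univ.erase σ₀, B :=
          Finset.prod_le_prod (fun σ _ => AbsoluteValue.nonneg _ _) (fun σ _ => hb σ)
      _ = B ^ (Finset.univ.erase σ₀).card := by rw [Finset.prod_const]
  have hval : Complex.abs (σ₀ a) = Complex.abs (a:ℂ) := rfl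
  calc (1:ℝ) ≤ Complex.abs (σ₀ a) * ∏ σ ∈ Finset.univ.erase σ₀, Complex.abs (σ a) := habsN
    _ ≤ Complex.abs (σ₀ a) * B ^ (Module.finrank ℚ L - 1) := by
        apply mul_le_mul_of_nonneg_left hrest (AbsoluteValue.nonneg _ _)
    _ = Complex.abs (a:ℂ) * B ^ (Module.finrank ℚ L - 1) := by rw [hval]

set_option maxHeartbeats 2000000 in
lemma goodList_root_step {d : ℕ} {vs : List ℝ} {δ : ℕ} {args : Fin (δ+1) → ℕ}
    (hδd : δ ≤ d) (hargs : ∀ i, args i < vs.length)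
    (L : IntermediateField ℚ ℂ) (hFD : FiniteDimensional ℚ L)
    (hrk : Module.finrank ℚ L ≤ (2*d+4) ^ vs.length)
    (xf yf : ℕ → L) (hinv : CInv d vs L xf yf) :
    GoodList d (vs ++ [largestRoot (fun i => vs.getD (args i) 0)]) := by
  classical
  set n := vs.length with hn
  set av : Fin (δ+1) → ℝ := fun i => vs.getD (args i) 0 with hav
  have hrkn1 : Module.finrank ℚ L ≤ (2*d+4)^(n+1) :=
    le_trans hrk (Nat.pow_le_pow_right (by omega) (by omega))
  by_cases hex : ∃ ζ : ℝ,
      IsGreatest {x : ℝ | ∑ i : Fin (δ + 1), av i * x ^ (i : ℕ) = 0} ζ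
  case neg =>
    -- value is 0
    have hstep : largestRoot av = 0 := by rw [largestRoot, dif_neg hex]
    rw [hstep]
    apply goodList_extend L L le_rfl hFD hrkn1 xf yf hinv 0 1
      (by simpa using isIntegral_zero) (by simpa using isIntegral_one)
      (by simp) (by simp) ?_
    intro φ
    constructor
    · rw [map_zero]
      simpa using le_trans zero_le_one (one_le_HH d n)
    · rw [map_one]
      simpa using one_le_HH d n
  case pos =>
  have hstep : largestRoot av = hex.choose := by rw [largestRoot, dif_pos hex]
  set ζ : ℝ := hex.choose with hζdef
  have hgr : IsGreatest {x : ℝ | ∑ i : Fin (δ + 1), av i * x ^ (i : ℕ) = 0} ζ :=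
    hex.choose_spec
  have hroot : ∑ i : Fin (δ+1), av i * ζ ^ (i:ℕ) = 0 := hgr.1
  have hA : ∃ i, av i ≠ 0 := by
    by_contra hall
    push_neg at hall
    have hmem : (ζ+1) ∈ {x : ℝ | ∑ i : Fin (δ + 1), av i * x ^ (i : ℕ) = 0} := by
      simp [hall]
    have := hgr.2 hmem
    linarith
  set ζC : ℂ := ((ζ:ℝ):ℂ) with hζC
  -- data at arg indices
  have hinvA : ∀ i : Fin (δ+1),
      IsIntegral ℤ (xf (args i) : ℂ) ∧ IsIntegral ℤ (yf (args i) : ℂ) ∧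
      (yf (args i) : ℂ) ≠ 0 ∧ ((av i : ℝ) : ℂ) = (xf (args i) : ℂ) / (yf (args i) : ℂ) ∧
      ∀ φ : L →ₐ[ℚ] ℂ, Complex.abs (φ (xf (args i))) ≤ HH d (args i) ∧
        Complex.abs (φ (yf (args i))) ≤ HH d (args i) :=
    fun i => hinv (args i) (hargs i)
  set Ytot : ℂ := ∏ t : Fin (δ+1), (yf (args t) : ℂ) with hYtot
  have hYne : Ytot ≠ 0 :=
    Finset.prod_ne_zero_iff.mpr (fun t _ => (hinvA t).2.2.1)
  -- b function
  set bfL : ℕ → L := fun j => if hj : j < δ+1 then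
      xf (args ⟨j, hj⟩) * ∏ t ∈ Finset.univ.erase (⟨j, hj⟩ : Fin (δ+1)), yf (args t)
    else 0 with hbfL
  have hbfL_eq : ∀ i : Fin (δ+1), bfL (i:ℕ) =
      xf (args i) * ∏ t ∈ Finset.univ.erase i, yf (args t) := by
    intro i
    rw [hbfL]
    simp only [i.isLt, dif_pos, Fin.eta]
  have hbcoe : ∀ i : Fin (δ+1), ((bfL (i:ℕ) : L) : ℂ) =
      (xf (args i) : ℂ) * ∏ t ∈ Finset.univ.erase i, (yf (args t) : ℂ) := by
    intro i
    rw [hbfL_eq i]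
    push_cast
    rfl
  have hbav : ∀ i : Fin (δ+1), ((bfL (i:ℕ) : L) : ℂ) = (av i : ℂ) * Ytot := by
    intro i
    rw [hbcoe i, hYtot, ← Finset.mul_prod_erase Finset.univ _ (Finset.mem_univ i),
      (hinvA i).2.2.2.1]
    have hy := (hinvA i).2.2.1
    field_simp
  -- complex equation
  have hsumC : (∑ i : Fin (δ+1), (av i : ℂ) * ζC ^ (i:ℕ)) = 0 := by
    have hcast := congrArg (Complex.ofReal) hroot
    push_cast at hcast
    exact hcast
  have hsum : ∑ j ∈ Finset.range (δ+1), ((bfL j : L):ℂ) * ζC ^ j = 0 := by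
    rw [← Fin.sum_univ_eq_sum_range (fun j => ((bfL j : L):ℂ) * ζC ^ j) (δ+1)]
    calc ∑ i : Fin (δ+1), ((bfL (i:ℕ) : L):ℂ) * ζC ^ (i:ℕ)
        = ∑ i : Fin (δ+1), Ytot * ((av i : ℂ) * ζC ^ (i:ℕ)) :=
          Finset.sum_congr rfl (fun i _ => by rw [hbav i]; ring)
      _ = Ytot * ∑ i : Fin (δ+1), (av i : ℂ) * ζC ^ (i:ℕ) := by rw [Finset.mul_sum]
      _ = 0 := by rw [hsumC, mul_zero]
  -- polynomial over L
  set pL : Polynomial L := ∑ j ∈ Finset.range (δ+1), Polynomial.monomial j (bfL j) with hpL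
  have hcoeff : ∀ j, pL.coeff j = if j < δ+1 then bfL j else 0 := by
    intro j
    rw [hpL, Polynomial.finset_sum_coeff]
    simp only [Polynomial.coeff_monomial]
    rw [Finset.sum_ite_eq' (Finset.range (δ+1)) j bfL]
    simp [Finset.mem_range]
  have haev : (Polynomial.aeval ζC) pL = 0 := by
    rw [hpL, map_sum]
    simp only [Polynomial.aeval_monomial]
    have : ∀ j, (algebraMap (↥L) ℂ) (bfL j) = ((bfL j : L) : ℂ) := fun j => rfl
    simp only [this]
    exact hsum
  have hpLne : pL ≠ 0 := by
    obtain ⟨i0, hi0⟩ := hA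
    have hb0 : ((bfL (i0:ℕ) : L):ℂ) ≠ 0 := by
      rw [hbav i0]
      exact mul_ne_zero (Complex.ofReal_ne_zero.mpr hi0) hYne
    intro h0
    apply hb0
    have hc : pL.coeff (i0:ℕ) = bfL (i0:ℕ) := by rw [hcoeff]; simp [i0.isLt]
    rw [← hc, h0, Polynomial.coeff_zero]
    simp
  set l := pL.natDegree with hldef
  have hlδ : l ≤ δ := by
    rw [hldef]
    apply Polynomial.natDegree_le_iff_coeff_eq_zero.mpr
    intro N hN
    rw [hcoeff, if_neg (by omega)]
  set blead : L := pL.leadingCoeff with hblead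
  have hblne : blead ≠ 0 := Polynomial.leadingCoeff_ne_zero.mpr hpLne
  have hbleq : blead = bfL l := by
    rw [hblead, Polynomial.leadingCoeff, ← hldef, hcoeff, if_pos (by omega)]
  have hblC : (blead : ℂ) ≠ 0 := by
    simpa using hblne
  -- integrality of the b's
  have hbint : ∀ j, IsIntegral ℤ ((bfL j : L):ℂ) := by
    intro j
    by_cases hj : j < δ+1
    · have heq : ((bfL j : L):ℂ) =
          (xf (args ⟨j,hj⟩) : ℂ) * ∏ t ∈ Finset.univ.erase (⟨j,hj⟩ : Fin (δ+1)),
            (yf (args t) : ℂ) := by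
        rw [hbfL]
        simp only [dif_pos hj]
        push_cast
        rfl
      rw [heq]
      have hprodmem : (∏ t ∈ Finset.univ.erase (⟨j,hj⟩ : Fin (δ+1)), (yf (args t) : ℂ))
          ∈ integralClosure ℤ ℂ :=
        Subalgebra.prod_mem _ (fun t _ => ((hinvA t).2.1 : _ ∈ integralClosure ℤ ℂ))
      exact IsIntegral.mul ((hinvA ⟨j,hj⟩).1) hprodmem
    · rw [hbfL]
      simp only [dif_neg hj]
      simp [isIntegral_zero]
  -- ζ is integral over L
  have hζalg : IsAlgebraic (↥L) ζC := ⟨pL, hpLne, haev⟩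
  have hζint : IsIntegral (↥L) ζC := hζalg.isIntegral
  have hmd : (minpoly (↥L) ζC).natDegree ≤ δ :=
    le_trans (Polynomial.natDegree_le_natDegree
      (Polynomial.degree_le_of_dvd (minpoly.dvd (↥L) ζC haev) hpLne)) hlδ
  -- the new field
  set Mfld : IntermediateField (↥L) ℂ := IntermediateField.adjoin (↥L) {ζC} with hMfld
  haveI hFDM : FiniteDimensional (↥L) ↥Mfld :=
    IntermediateField.adjoin.finiteDimensional hζint
  set L' : IntermediateField ℚ ℂ := Mfld.restrictScalars ℚ with hL'
  have hle' : L ≤ L' := by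
    intro u hu
    rw [hL', IntermediateField.mem_restrictScalars]
    exact Mfld.algebraMap_mem ⟨u, hu⟩
  haveI hFD' : FiniteDimensional ℚ (↥L') := by
    change FiniteDimensional ℚ ↥Mfld
    exact FiniteDimensional.trans ℚ (↥L) ↥Mfld
  have hrkM : Module.finrank (↥L) ↥Mfld ≤ d := by
    have := IntermediateField.adjoin.finrank hζint
    rw [hMfld]
    rw [this]
    exact le_trans hmd hδd
  have hrk' : Module.finrank ℚ (↥L') ≤ (2*d+4)^(n+1) := by
    have hchg : Module.finrank ℚ (↥L') = Module.finrank ℚ ↥Mfld := rfl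
    have htower : Module.finrank ℚ (↥L) * Module.finrank (↥L) ↥Mfld
        = Module.finrank ℚ ↥Mfld := Module.finrank_mul_finrank ℚ (↥L) ↥Mfld
    rw [hchg, ← htower]
    calc Module.finrank ℚ (↥L) * Module.finrank (↥L) ↥Mfld
        ≤ (2*d+4)^n * d := Nat.mul_le_mul hrk hrkM
      _ ≤ (2*d+4)^n * (2*d+4) := Nat.mul_le_mul_left _ (by omega)
      _ = (2*d+4)^(n+1) := by ring
  -- elements of L'
  have hζmem : ζC ∈ L' := by
    rw [hL', IntermediateField.mem_restrictScalars]
    exact IntermediateField.mem_adjoin_simple_self (↥L) ζC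
  set ζ' : ↥L' := ⟨ζC, hζmem⟩ with hζ'
  set ι' : ↥L →ₐ[ℚ] ↥L' := IntermediateField.inclusion hle' with hι'
  set bl' : ↥L' := ι' blead with hbl'
  have hblcoe : ((bl' : ↥L') : ℂ) = (blead : ℂ) := rfl
  -- integrality of numerator via integral closure
  have hwint : IsIntegral ℤ ((blead : ℂ) * ζC) := by
    set Rcl := integralClosure ℤ ℂ with hRcl
    set bR : ℕ → Rcl := fun j => ⟨((bfL j : L):ℂ), hbint j⟩ with hbR
    set pR : Polynomial Rcl := ∑ j ∈ Finset.range (δ+1), Polynomial.monomial j (bR j)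
      with hpR
    have hinjR : Function.Injective (algebraMap Rcl ℂ) := fun u v h => Subtype.ext h
    have hinjL : Function.Injective (algebraMap (↥L) ℂ) := (algebraMap (↥L) ℂ).injective
    have hmapR : pR.map (algebraMap Rcl ℂ) = pL.map (algebraMap (↥L) ℂ) := by
      rw [hpR, hpL, Polynomial.map_sum, Polynomial.map_sum]
      apply Finset.sum_congr rfl
      intro j _
      rw [Polynomial.map_monomial, Polynomial.map_monomial]
      rfl
    have hdegR : pR.natDegree = pL.natDegree := by
      rw [← Polynomial.natDegree_map_eq_of_injective hinjR pR, hmapR,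
        Polynomial.natDegree_map_eq_of_injective hinjL]
    have hevalR : Polynomial.eval₂ (algebraMap Rcl ℂ) ζC pR = 0 := by
      rw [Polynomial.eval₂_eq_eval_map, hmapR, ← Polynomial.eval₂_eq_eval_map,
        ← Polynomial.aeval_def]
      exact haev
    have hleadR : algebraMap Rcl ℂ pR.leadingCoeff = (blead : ℂ) := by
      have h1 : algebraMap Rcl ℂ pR.leadingCoeff
          = (pR.map (algebraMap Rcl ℂ)).coeff pR.natDegree := by
        rw [Polynomial.coeff_map]
        rfl
      rw [h1, hmapR, hdegR, Polynomial.coeff_map]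
      rfl
    have hwR := RingHom.isIntegralElem_leadingCoeff_mul (algebraMap Rcl ℂ) pR ζC hevalR
    rw [hleadR] at hwR
    haveI : Algebra.IsIntegral ℤ Rcl := ⟨fun x => integralClosure.isIntegral x⟩
    exact isIntegral_trans _ hwR
  -- bounds
  set M : ℝ := (2:ℝ)^((2*d+4)^(n+1)) with hM
  have hM1 : (1:ℝ) ≤ M := one_le_pow₀ one_le_two
  have hHHM : ∀ k, k < n → HH d k ≤ M := by
    intro k hk
    exact pow_le_pow_right₀ one_le_two (Nat.pow_le_pow_right (by omega) (by omega))
  have hB1 : (1:ℝ) ≤ M^(d+1) := one_le_pow₀ hM1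
  have hbB : ∀ (ψ : ↥L →ₐ[ℚ] ℂ) (j : ℕ), Complex.abs (ψ (bfL j)) ≤ M^(d+1) := by
    intro ψ j
    by_cases hj : j < δ+1
    · rw [hbfL]
      simp only [dif_pos hj]
      rw [map_mul, map_prod, map_mul]
      have hx : Complex.abs (ψ (xf (args ⟨j,hj⟩))) ≤ M :=
        le_trans ((hinvA ⟨j,hj⟩).2.2.2.2 ψ).1 (hHHM _ (hargs _))
      have hy : ∀ t : Fin (δ+1), Complex.abs (ψ (yf (args t))) ≤ M :=
        fun t => le_trans ((hinvA t).2.2.2.2 ψ).2 (hHHM _ (hargs _))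
      have hprod : Complex.abs (∏ t ∈ Finset.univ.erase (⟨j,hj⟩ : Fin (δ+1)),
          ψ (yf (args t))) ≤ M^δ := by
        rw [map_prod]
        calc ∏ t ∈ Finset.univ.erase (⟨j,hj⟩ : Fin (δ+1)), Complex.abs (ψ (yf (args t)))
            ≤ ∏ _t ∈ Finset.univ.erase (⟨j,hj⟩ : Fin (δ+1)), M :=
              Finset.prod_le_prod (fun t _ => AbsoluteValue.nonneg _ _) (fun t _ => hy t)
          _ = M ^ (Finset.univ.erase (⟨j,hj⟩ : Fin (δ+1))).card := by
              rw [Finset.prod_const]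
          _ = M ^ δ := by
              rw [Finset.card_erase_of_mem (Finset.mem_univ _), Finset.card_univ,
                Fintype.card_fin, Nat.add_sub_cancel]
      calc Complex.abs (ψ (xf (args ⟨j,hj⟩))) * Complex.abs (∏ t ∈ Finset.univ.erase
            (⟨j,hj⟩ : Fin (δ+1)), ψ (yf (args t)))
          ≤ M * M^δ := mul_le_mul hx hprod (AbsoluteValue.nonneg _ _)
            (le_trans zero_le_one hM1)
        _ = M^(δ+1) := by ring
        _ ≤ M^(d+1) := pow_le_pow_right₀ hM1 (by omega)
    · rw [hbfL]
      simp only [dif_neg hj]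
      rw [map_zero]
      simpa using le_trans zero_le_one hB1
  have hab : ∀ φ : ↥L' →ₐ[ℚ] ℂ,
      Complex.abs (φ (bl' * ζ')) ≤ HH d n ∧ Complex.abs (φ bl') ≤ HH d n := by
    intro φ
    set ψ : ↥L →ₐ[ℚ] ℂ := φ.comp ι' with hψ
    have hψinj : Function.Injective ψ := ψ.toRingHom.injective
    set z : ℂ := φ ζ' with hz
    -- equation in L'
    have hEq : ∑ j ∈ Finset.range (δ+1), (ι' (bfL j)) * ζ'^j = (0 : ↥L') := by
      have hcoeL' : ((∑ j ∈ Finset.range (δ+1), (ι' (bfL j)) * ζ'^j : ↥L') : ℂ)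
          = ∑ j ∈ Finset.range (δ+1), ((bfL j : L):ℂ) * ζC ^ j := by
        push_cast
        rfl
      have : ((∑ j ∈ Finset.range (δ+1), (ι' (bfL j)) * ζ'^j : ↥L') : ℂ) = 0 := by
        rw [hcoeL', hsum]
      exact_mod_cast this
    have hEqφ : ∑ j ∈ Finset.range (δ+1), ψ (bfL j) * z^j = 0 := by
      have := congrArg φ hEq
      rw [map_sum, map_zero] at this
      simp only [map_mul, map_pow] at this
      exact this
    -- polynomial over ℂ
    set r : Polynomial ℂ := pL.map ψ.toRingHom with hr
    have hrdeg : r.natDegree = l := by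
      rw [hr, Polynomial.natDegree_map_eq_of_injective hψinj]
    have hrne : r ≠ 0 := by
      rw [hr]
      exact (Polynomial.map_ne_zero_iff hψinj).mpr hpLne
    have hreval : r.eval z = 0 := by
      rw [hr, Polynomial.eval_map, hpL, Polynomial.eval₂_finset_sum]
      simp only [Polynomial.eval₂_monomial]
      exact hEqφ
    have hrcoeff : ∀ i, Complex.abs (r.coeff i) ≤ M^(d+1) := by
      intro i
      rw [hr, Polynomial.coeff_map]
      by_cases hi : i < δ+1
      · rw [hcoeff, if_pos hi]
        exact hbB ψ i
      · rw [hcoeff, if_neg hi, map_zero]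
        simpa using le_trans zero_le_one hB1
    have hrlead : r.leadingCoeff = ψ blead := by
      rw [Polynomial.leadingCoeff, hrdeg, hr, Polynomial.coeff_map, hblead,
        Polynomial.leadingCoeff]
      rfl
    have hbound := root_bound hrne hreval hB1 hrcoeff
    rw [hrlead, hrdeg] at hbound
    have hφa : φ (bl' * ζ') = ψ blead * z := by
      rw [map_mul]
      rfl
    have hφb : φ bl' = ψ blead := rfl
    constructor
    · rw [hφa]
      calc Complex.abs (ψ blead * z) ≤ (l + 1) * M^(d+1) := hbound
        _ ≤ (d + 1) * M^(d+1) := by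
            apply mul_le_mul_of_nonneg_right _ (by positivity)
            have : l ≤ d := le_trans hlδ hδd
            exact_mod_cast Nat.succ_le_succ this
        _ ≤ HH d n := keyIneq d n
    · rw [hφb]
      calc Complex.abs (ψ blead) ≤ M^(d+1) := by
            have := hbB ψ l
            rwa [← hbleq] at this
        _ ≤ (d+1) * M^(d+1) := by nlinarith [hB1]
        _ ≤ HH d n := keyIneq d n
  -- assemble
  have hstep' : largestRoot av = ζ := hstep
  rw [hstep']
  apply goodList_extend L L' hle' hFD' hrk' xf yf hinv (bl' * ζ') bl' ?_ ?_ ?_ ?_ hab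
  · have : ((bl' * ζ' : ↥L') : ℂ) = (blead : ℂ) * ζC := by push_cast; rfl
    rw [this]
    exact hwint
  · rw [hblcoe, hbleq]
    exact hbint l
  · rw [hblcoe]
    exact hblC
  · have hcoe : ((bl' * ζ' : ↥L') : ℂ) = (blead : ℂ) * ζC := by push_cast; rfl
    rw [hcoe, hblcoe, mul_comm ((blead:ℂ)) ζC, mul_div_assoc, div_self hblC, mul_one]

set_option maxHeartbeats 1000000 in
lemma goodList_step (d : ℕ) (hd : 1 ≤ d) (vs : List ℝ) (g : GateOp)
    (hg : g.WF d vs.length) (h : GoodList d vs) : GoodList d (vs ++ [g.step vs]) := by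
  classical
  obtain ⟨L, hFD, hrk, xf, yf, hinv⟩ := h
  haveI := hFD
  set n := vs.length with hn
  have hrkn1 : Module.finrank ℚ L ≤ (2*d+4)^(n+1) :=
    le_trans hrk (Nat.pow_le_pow_right (by omega) (by omega))
  set M : ℝ := (2:ℝ)^((2*d+4)^(n+1)) with hM
  have hM1 : (1:ℝ) ≤ M := one_le_pow₀ one_le_two
  have hM0 : (0:ℝ) ≤ M := le_trans zero_le_one hM1
  have hHHM : ∀ k, k < n → HH d k ≤ M := fun k hk =>
    pow_le_pow_right₀ one_le_two (Nat.pow_le_pow_right (by omega) (by omega))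
  have hkey : (d+1:ℝ) * M^(d+1) ≤ HH d n := keyIneq d n
  have h2M : 2 * M^2 ≤ HH d n := by
    have h1 : (2:ℝ) ≤ (d+1:ℝ) := by
      have : (2:ℕ) ≤ d+1 := by omega
      exact_mod_cast this
    have h2 : M^2 ≤ M^(d+1) := pow_le_pow_right₀ hM1 (by omega)
    calc 2*M^2 ≤ (d+1:ℝ)*M^(d+1) := mul_le_mul h1 h2 (by positivity) (by positivity)
      _ ≤ HH d n := hkey
  have hM2 : M^2 ≤ HH d n := by nlinarith [h2M, sq_nonneg M]
  have hM_HH : M ≤ HH d n := by nlinarith [h2M, hM1]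
  have hone_HH : (1:ℝ) ≤ HH d n := one_le_HH d n
  cases g with
  | zero =>
    have hstep : GateOp.step vs GateOp.zero = 0 := rfl
    rw [hstep]
    apply goodList_extend L L le_rfl hFD hrkn1 xf yf hinv 0 1
      (by simpa using isIntegral_zero) (by simpa using isIntegral_one)
      (by simp) (by simp) ?_
    intro φ
    refine ⟨?_, ?_⟩
    · rw [map_zero]
      simpa using le_trans zero_le_one hone_HH
    · rw [map_one]
      simpa using hone_HH
  | one =>
    have hstep : GateOp.step vs GateOp.one = 1 := rfl
    rw [hstep]
    apply goodList_extend L L le_rfl hFD hrkn1 xf yf hinv 1 1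
      (by simpa using isIntegral_one) (by simpa using isIntegral_one)
      (by simp) (by simp) ?_
    intro φ
    refine ⟨?_, ?_⟩
    · rw [map_one]
      simpa using hone_HH
    · rw [map_one]
      simpa using hone_HH
  | add a b =>
    obtain ⟨ha, hb⟩ := hg
    obtain ⟨hxa, hya, hya0, hva, hba⟩ := hinv a ha
    obtain ⟨hxb, hyb, hyb0, hvb, hbb⟩ := hinv b hb
    have hcoe1 : ((xf a * yf b + xf b * yf a : L) : ℂ)
        = (xf a:ℂ)*(yf b:ℂ) + (xf b:ℂ)*(yf a:ℂ) := by push_cast; rfl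
    have hcoe2 : ((yf a * yf b : L):ℂ) = (yf a:ℂ)*(yf b:ℂ) := by push_cast; rfl
    refine goodList_extend L L le_rfl hFD hrkn1 xf yf hinv
      (xf a * yf b + xf b * yf a) (yf a * yf b) ?_ ?_ ?_ ?_ ?_
    · rw [hcoe1]; exact (hxa.mul hyb).add (hxb.mul hya)
    · rw [hcoe2]; exact hya.mul hyb
    · rw [hcoe2]; exact mul_ne_zero hya0 hyb0
    · have hstep : GateOp.step vs (GateOp.add a b) = vs.getD a 0 + vs.getD b 0 := rfl
      rw [hstep, hcoe1, hcoe2]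
      push_cast
      rw [hva, hvb]
      field_simp
    · intro φ
      have hxaM := le_trans (hba φ).1 (hHHM a ha)
      have hyaM := le_trans (hba φ).2 (hHHM a ha)
      have hxbM := le_trans (hbb φ).1 (hHHM b hb)
      have hybM := le_trans (hbb φ).2 (hHHM b hb)
      constructor
      · rw [map_add, map_mul, map_mul]
        calc Complex.abs (φ (xf a) * φ (yf b) + φ (xf b) * φ (yf a))
            ≤ Complex.abs (φ (xf a) * φ (yf b)) + Complex.abs (φ (xf b) * φ (yf a)) :=
              Complex.abs.add_le _ _
          _ = Complex.abs (φ (xf a)) * Complex.abs (φ (yf b))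
              + Complex.abs (φ (xf b)) * Complex.abs (φ (yf a)) := by
              rw [map_mul, map_mul]
          _ ≤ M*M + M*M := by
              apply add_le_add
              · exact mul_le_mul hxaM hybM (AbsoluteValue.nonneg _ _) hM0
              · exact mul_le_mul hxbM hyaM (AbsoluteValue.nonneg _ _) hM0
          _ = 2*M^2 := by ring
          _ ≤ HH d n := h2M
      · rw [map_mul, map_mul]
        calc Complex.abs (φ (yf a)) * Complex.abs (φ (yf b)) ≤ M*M :=
            mul_le_mul hyaM hybM (AbsoluteValue.nonneg _ _) hM0
          _ = M^2 := by ring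
          _ ≤ HH d n := hM2
  | sub a b =>
    obtain ⟨ha, hb⟩ := hg
    obtain ⟨hxa, hya, hya0, hva, hba⟩ := hinv a ha
    obtain ⟨hxb, hyb, hyb0, hvb, hbb⟩ := hinv b hb
    have hcoe1 : ((xf a * yf b - xf b * yf a : L) : ℂ)
        = (xf a:ℂ)*(yf b:ℂ) - (xf b:ℂ)*(yf a:ℂ) := by push_cast; rfl
    have hcoe2 : ((yf a * yf b : L):ℂ) = (yf a:ℂ)*(yf b:ℂ) := by push_cast; rfl
    refine goodList_extend L L le_rfl hFD hrkn1 xf yf hinv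
      (xf a * yf b - xf b * yf a) (yf a * yf b) ?_ ?_ ?_ ?_ ?_
    · rw [hcoe1]; exact (hxa.mul hyb).sub (hxb.mul hya)
    · rw [hcoe2]; exact hya.mul hyb
    · rw [hcoe2]; exact mul_ne_zero hya0 hyb0
    · have hstep : GateOp.step vs (GateOp.sub a b) = vs.getD a 0 - vs.getD b 0 := rfl
      rw [hstep, hcoe1, hcoe2]
      push_cast
      rw [hva, hvb]
      field_simp
    · intro φ
      have hxaM := le_trans (hba φ).1 (hHHM a ha)
      have hyaM := le_trans (hba φ).2 (hHHM a ha)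
      have hxbM := le_trans (hbb φ).1 (hHHM b hb)
      have hybM := le_trans (hbb φ).2 (hHHM b hb)
      constructor
      · rw [map_sub, map_mul, map_mul]
        calc Complex.abs (φ (xf a) * φ (yf b) - φ (xf b) * φ (yf a))
            ≤ Complex.abs (φ (xf a) * φ (yf b)) + Complex.abs (φ (xf b) * φ (yf a)) :=
              Complex.abs.sub_le_add _ _
          _ = Complex.abs (φ (xf a)) * Complex.abs (φ (yf b))
              + Complex.abs (φ (xf b)) * Complex.abs (φ (yf a)) := by
              rw [map_mul, map_mul]
          _ ≤ M*M + M*M := by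
              apply add_le_add
              · exact mul_le_mul hxaM hybM (AbsoluteValue.nonneg _ _) hM0
              · exact mul_le_mul hxbM hyaM (AbsoluteValue.nonneg _ _) hM0
          _ = 2*M^2 := by ring
          _ ≤ HH d n := h2M
      · rw [map_mul, map_mul]
        calc Complex.abs (φ (yf a)) * Complex.abs (φ (yf b)) ≤ M*M :=
            mul_le_mul hyaM hybM (AbsoluteValue.nonneg _ _) hM0
          _ = M^2 := by ring
          _ ≤ HH d n := hM2
  | mul a b =>
    obtain ⟨ha, hb⟩ := hg
    obtain ⟨hxa, hya, hya0, hva, hba⟩ := hinv a ha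
    obtain ⟨hxb, hyb, hyb0, hvb, hbb⟩ := hinv b hb
    have hcoe1 : ((xf a * xf b : L) : ℂ) = (xf a:ℂ)*(xf b:ℂ) := by push_cast; rfl
    have hcoe2 : ((yf a * yf b : L):ℂ) = (yf a:ℂ)*(yf b:ℂ) := by push_cast; rfl
    refine goodList_extend L L le_rfl hFD hrkn1 xf yf hinv
      (xf a * xf b) (yf a * yf b) ?_ ?_ ?_ ?_ ?_
    · rw [hcoe1]; exact hxa.mul hxb
    · rw [hcoe2]; exact hya.mul hyb
    · rw [hcoe2]; exact mul_ne_zero hya0 hyb0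
    · have hstep : GateOp.step vs (GateOp.mul a b) = vs.getD a 0 * vs.getD b 0 := rfl
      rw [hstep, hcoe1, hcoe2]
      push_cast
      rw [hva, hvb]
      field_simp
    · intro φ
      have hxaM := le_trans (hba φ).1 (hHHM a ha)
      have hyaM := le_trans (hba φ).2 (hHHM a ha)
      have hxbM := le_trans (hbb φ).1 (hHHM b hb)
      have hybM := le_trans (hbb φ).2 (hHHM b hb)
      constructor
      · rw [map_mul, map_mul]
        calc Complex.abs (φ (xf a)) * Complex.abs (φ (xf b)) ≤ M*M :=
            mul_le_mul hxaM hxbM (AbsoluteValue.nonneg _ _) hM0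
          _ = M^2 := by ring
          _ ≤ HH d n := hM2
      · rw [map_mul, map_mul]
        calc Complex.abs (φ (yf a)) * Complex.abs (φ (yf b)) ≤ M*M :=
            mul_le_mul hyaM hybM (AbsoluteValue.nonneg _ _) hM0
          _ = M^2 := by ring
          _ ≤ HH d n := hM2
  | ch x nn z p =>
    obtain ⟨hx, hnn, hz, hp⟩ := hg
    have hstep0 : GateOp.step vs (GateOp.ch x nn z p) =
        (if vs.getD x 0 < 0 then vs.getD nn 0
          else if vs.getD x 0 = 0 then vs.getD z 0 else vs.getD p 0) := rfl
    have hj' : ∃ j, j < n ∧ GateOp.step vs (GateOp.ch x nn z p) = vs.getD j 0 := by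
      by_cases h1 : vs.getD x 0 < 0
      · exact ⟨nn, hnn, by rw [hstep0, if_pos h1]⟩
      · by_cases h2 : vs.getD x 0 = 0
        · exact ⟨z, hz, by rw [hstep0, if_neg h1, if_pos h2]⟩
        · exact ⟨p, hp, by rw [hstep0, if_neg h1, if_neg h2]⟩
    obtain ⟨j, hj, hstep⟩ := hj'
    rw [hstep]
    obtain ⟨h1, h2, h3, h4, h5⟩ := hinv j hj
    refine goodList_extend L L le_rfl hFD hrkn1 xf yf hinv (xf j) (yf j) h1 h2 h3 h4 ?_
    intro φ
    exact ⟨(h5 φ).1.trans (HH_mono d hj.le), (h5 φ).2.trans (HH_mono d hj.le)⟩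
  | root δ args =>
    obtain ⟨hδ1, hδd, hargs⟩ := hg
    have hstep : GateOp.step vs (GateOp.root δ args)
        = largestRoot (fun i => vs.getD (args i) 0) := rfl
    rw [hstep]
    exact goodList_root_step hδd hargs L hFD hrk xf yf hinv

lemma goodList_circuit (d : ℕ) (hd : 1 ≤ d) (c : List GateOp) (hc : IsCircuit d c) :
    GoodList d (circuitValues c) := by
  induction c using List.reverseRecOn with
  | nil => exact goodList_nil d
  | append_singleton c g ih =>
    obtain ⟨hc', hg⟩ := isCircuit_concat hc
    rw [circuitValues_concat]
    exact goodList_step d hd (circuitValues c) g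
      (by rw [length_circuitValues]; exact hg) (ih hc')

set_option maxHeartbeats 1000000 in
lemma goodList_value_bound (d : ℕ) (vs : List ℝ) (h : GoodList d vs)
    (k : ℕ) (hk : k < vs.length) (hne : vs.getD k 0 ≠ 0) :
    ((2:ℝ)^((2*d+4)^(4*vs.length)))⁻¹ ≤ |vs.getD k 0| ∧
      |vs.getD k 0| ≤ (2:ℝ)^((2*d+4)^(4*vs.length)) := by
  classical
  obtain ⟨L, hFD, hrk, xf, yf, hinv⟩ := h
  haveI := hFD
  set n := vs.length with hn
  have hn1 : 1 ≤ n := by omega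
  obtain ⟨hxint, hyint, hy0, hveq, hbound⟩ := hinv k hk
  set B : ℝ := (2:ℝ)^((2*d+4)^(n+1)) with hB
  have hB1 : (1:ℝ) ≤ B := one_le_pow₀ one_le_two
  have hB0 : (0:ℝ) < B := lt_of_lt_of_le one_pos hB1
  have hHB : HH d k ≤ B :=
    pow_le_pow_right₀ one_le_two (Nat.pow_le_pow_right (by omega) (by omega))
  have hbx : ∀ φ : L →ₐ[ℚ] ℂ, Complex.abs (φ (xf k)) ≤ B :=
    fun φ => (hbound φ).1.trans hHB
  have hby : ∀ φ : L →ₐ[ℚ] ℂ, Complex.abs (φ (yf k)) ≤ B :=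
    fun φ => (hbound φ).2.trans hHB
  set D := Module.finrank ℚ L with hD
  have hD1 : 1 ≤ D := Module.finrank_pos
  have hDE : D ≤ (2*d+4)^n := hrk
  have hvC : ((vs.getD k 0 : ℝ):ℂ) ≠ 0 := Complex.ofReal_ne_zero.mpr hne
  have hx0 : (xf k : ℂ) ≠ 0 := by
    intro h0; apply hvC; rw [hveq, h0, zero_div]
  have hxlow := one_le_abs_mul (xf k) hx0 hxint hB1 hbx
  have hylow := one_le_abs_mul (yf k) hy0 hyint hB1 hby
  have hxup : Complex.abs (xf k : ℂ) ≤ B := hbx L.val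
  have hyup : Complex.abs (yf k : ℂ) ≤ B := hby L.val
  have habsv : |vs.getD k 0| = Complex.abs ((xf k : ℂ)) / Complex.abs ((yf k : ℂ)) := by
    rw [← Complex.abs_ofReal, hveq, map_div₀]
  have hyabs : 0 < Complex.abs (yf k : ℂ) := AbsoluteValue.pos _ hy0
  have hxabs : 0 < Complex.abs (xf k : ℂ) := AbsoluteValue.pos _ hx0
  have hBD : (0:ℝ) < B ^ (D-1) := by positivity
  have hxlow' : (B^(D-1))⁻¹ ≤ Complex.abs (xf k : ℂ) := by
    calc (B^(D-1))⁻¹ = 1 * (B^(D-1))⁻¹ := by ring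
      _ ≤ (Complex.abs ((xf k:ℂ)) * B^(D-1)) * (B^(D-1))⁻¹ :=
          mul_le_mul_of_nonneg_right hxlow (by positivity)
      _ = Complex.abs (xf k : ℂ) := by field_simp
  have hylow' : (B^(D-1))⁻¹ ≤ Complex.abs (yf k : ℂ) := by
    calc (B^(D-1))⁻¹ = 1 * (B^(D-1))⁻¹ := by ring
      _ ≤ (Complex.abs ((yf k:ℂ)) * B^(D-1)) * (B^(D-1))⁻¹ :=
          mul_le_mul_of_nonneg_right hylow (by positivity)
      _ = Complex.abs (yf k : ℂ) := by field_simp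
  have hBD' : B^(D-1) * B = B^D := by
    rw [← pow_succ]; congr 1; omega
  have hBDle : B^D ≤ (2:ℝ)^((2*d+4)^(4*n)) := by
    rw [hB, ← pow_mul]
    apply pow_le_pow_right₀ one_le_two
    calc (2*d+4)^(n+1) * D ≤ (2*d+4)^(n+1) * (2*d+4)^n := Nat.mul_le_mul_left _ hDE
      _ = (2*d+4)^(n+1+n) := by rw [← pow_add]
      _ ≤ (2*d+4)^(4*n) := Nat.pow_le_pow_right (by omega) (by omega)
  constructor
  · have h2 : (B^(D-1))⁻¹ / B ≤ |vs.getD k 0| := by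
      rw [habsv]
      exact div_le_div₀ (AbsoluteValue.nonneg _ _) hxlow' hyabs hyup
    have h3 : (B^(D-1))⁻¹ / B = (B^D)⁻¹ := by
      rw [div_eq_mul_inv, ← mul_inv, hBD']
    have h4 : ((2:ℝ)^((2*d+4)^(4*n)))⁻¹ ≤ (B^D)⁻¹ :=
      inv_anti₀ (by positivity) hBDle
    calc ((2:ℝ)^((2*d+4)^(4*n)))⁻¹ ≤ (B^D)⁻¹ := h4
      _ = (B^(D-1))⁻¹ / B := h3.symm
      _ ≤ |vs.getD k 0| := h2
  · have h2 : |vs.getD k 0| ≤ B / (B^(D-1))⁻¹ := by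
      rw [habsv]
      exact div_le_div₀ (le_of_lt hB0) hxup (by positivity) hylow'
    have h3 : B / (B^(D-1))⁻¹ = B^D := by
      rw [div_eq_mul_inv, inv_inv, mul_comm, hBD']
    calc |vs.getD k 0| ≤ B / (B^(D-1))⁻¹ := h2
      _ = B^D := h3
      _ ≤ (2:ℝ)^((2*d+4)^(4*n)) := hBDle

/-- For every `d ≥ 1` there is a constant `C_d > 0` such that
every closed `B_d`-circuit of size `n` with nonzero value `v` satisfies
`2^(-2^(C_d·n)) < |v| < 2^(2^(C_d·n))`. -/
theorem circuit_zero_bound (d : ℕ) (hd : 1 ≤ d) :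
    ∃ C : ℝ, 0 < C ∧
      ∀ c : List GateOp, IsCircuit d c → circuitValue c ≠ 0 →
        (2 : ℝ) ^ (-(2 : ℝ) ^ (C * (c.length : ℝ))) < |circuitValue c| ∧
        |circuitValue c| < (2 : ℝ) ^ ((2 : ℝ) ^ (C * (c.length : ℝ))) := by
  refine ⟨((4*(2*d+4) : ℕ) : ℝ), by positivity, ?_⟩
  intro c hc hv
  set n := c.length with hn
  have hcne : c ≠ [] := by
    intro h
    apply hv
    rw [h]
    simp [circuitValue, circuitValues]
  have hn1 : 1 ≤ n := by
    have := List.length_pos_iff.mpr hcne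
    omega
  have hgl := goodList_circuit d hd c hc
  have hlen : (circuitValues c).length = n := length_circuitValues c
  have hk : n - 1 < (circuitValues c).length := by rw [hlen]; omega
  have hne' : (circuitValues c).getD (n-1) 0 ≠ 0 := hv
  have hb := goodList_value_bound d (circuitValues c) hgl (n-1) hk hne'
  rw [hlen] at hb
  have hvv : |circuitValue c| = |(circuitValues c).getD (n-1) 0| := rfl
  have hnatlt : (2*d+4)^(4*n) < 2^(4*(2*d+4)*n) := by
    calc (2*d+4)^(4*n) < (2^(2*d+4))^(4*n) :=
        Nat.pow_lt_pow_left (Nat.lt_two_pow_self (n := 2*d+4)) (by omega)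
      _ = 2^((2*d+4)*(4*n)) := by rw [← pow_mul]
      _ = 2^(4*(2*d+4)*n) := by ring_nf
  have hCn : ((4*(2*d+4) : ℕ):ℝ) * (n:ℝ) = ((4*(2*d+4)*n : ℕ):ℝ) := by push_cast; ring
  have hlt : (((2*d+4)^(4*n) : ℕ) : ℝ) < (2:ℝ)^(((4*(2*d+4):ℕ):ℝ) * (n:ℝ)) := by
    rw [hCn, Real.rpow_natCast]
    exact_mod_cast hnatlt
  constructor
  · have hlow := hb.1
    have hlt2 : (2:ℝ)^(-(2:ℝ)^(((4*(2*d+4):ℕ):ℝ)*(n:ℝ)))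
        < ((2:ℝ)^((2*d+4)^(4*n)))⁻¹ := by
      have e1 : ((2:ℝ)^((2*d+4)^(4*n)))⁻¹ = (2:ℝ)^(-(((2*d+4)^(4*n):ℕ):ℝ)) := by
        rw [Real.rpow_neg (by norm_num), Real.rpow_natCast]
      rw [e1]
      apply (Real.rpow_lt_rpow_left_iff one_lt_two).mpr
      exact neg_lt_neg hlt
    rw [hvv]
    exact lt_of_lt_of_le hlt2 hlow
  · have hup := hb.2
    have hlt2 : ((2:ℝ)^((2*d+4)^(4*n)))
        < (2:ℝ)^((2:ℝ)^(((4*(2*d+4):ℕ):ℝ)*(n:ℝ))) := by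
      rw [← Real.rpow_natCast (2:ℝ) ((2*d+4)^(4*n))]
      exact (Real.rpow_lt_rpow_left_iff one_lt_two).mpr hlt
    rw [hvv]
    exact lt_of_le_of_lt hup hlt2
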